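/- Let k be a commutative ring, n ≥ 1, F the free group on n generators t_1, …, t_n, Λ = MonoidAlgebra k F its group algebra, and ε : Λ → k the augmentation. Then the augmentation ideal ker ε, viewed as a left ideal of Λ (a left Λ-submodule of Λ), is a free left Λ-module of rank n on the elements t_i − 1: there exists a basis b : Basis (Fin n) Λ (ker ε) whose i-th element is t_i − 1 (the image in Λ of the i-th free generator, minus 1). -/

import Mathlib

/-- The augmentation map of the group algebra of the free group of rank `n`:
the `k`-algebra homomorphism sending every group element to `1`. -/
noncomputable def freeGroupAug (k : Type*) [CommRing k] (n : ℕ) :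
    MonoidAlgebra k (FreeGroup (Fin n)) →ₐ[k] k :=
  MonoidAlgebra.lift k k (FreeGroup (Fin n)) 1

noncomputable section FoxAux

namespace FoxAux

variable (k : Type*) [CommRing k] (n : ℕ)

local notation "F" => FreeGroup (Fin n)
local notation "Λ" => MonoidAlgebra k (FreeGroup (Fin n))

def addAutToMulAut (M : Type*) [AddGroup M] : Multiplicative (AddAut M) →* MulAut (Multiplicative M) where
  toFun e := AddEquiv.toMultiplicative (Multiplicative.toAdd e)
  map_one' := rfl
  map_mul' _ _ := rfl

def phi : F →* MulAut (Multiplicative (Fin n → Λ)) :=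
  (addAutToMulAut _).comp ((DistribMulAction.toAddAut (Λ)ˣ (Fin n → Λ)).comp
    (MonoidAlgebra.of k F).toHomUnits)

def dHom : F →* (Multiplicative (Fin n → Λ)) ⋊[phi k n] F :=
  FreeGroup.lift fun i =>
    ⟨Multiplicative.ofAdd (Pi.single i 1), FreeGroup.of i⟩

lemma right_dHom (g : F) : (dHom k n g).right = g := by
  have : (SemidirectProduct.rightHom.comp (dHom k n)) = MonoidHom.id F := by
    apply FreeGroup.ext_hom
    intro i
    simp [dHom, SemidirectProduct.rightHom]
  exact DFunLike.congr_fun this g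

def D (g : F) : Fin n → Λ := Multiplicative.toAdd (dHom k n g).left

lemma D_one : D k n 1 = 0 := by simp [D]

lemma D_of (i : Fin n) : D k n (FreeGroup.of i) = Pi.single i 1 := by
  simp [D, dHom]

lemma D_mul (g h : F) :
    D k n (g * h) = D k n g + (MonoidAlgebra.of k F).toHomUnits g • D k n h := by
  have := SemidirectProduct.mul_left (dHom k n g) (dHom k n h)
  rw [← map_mul] at this
  unfold D
  rw [this, right_dHom]
  rfl

lemma unitsSmul (g : F) (c : Fin n → Λ) :
    (MonoidAlgebra.of k F).toHomUnits g • c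
      = fun j => MonoidAlgebra.of k F g * c j := rfl

/-- The map `(c_i) ↦ ∑ c_i (t_i - 1)`, a left `Λ`-linear map. -/
def f : (Fin n → Λ) →ₗ[Λ] Λ where
  toFun c := ∑ i, c i * (MonoidAlgebra.of k F (FreeGroup.of i) - 1)
  map_add' c d := by simp [add_mul, Finset.sum_add_distrib]
  map_smul' a c := by simp [Finset.mul_sum, mul_assoc]

lemma f_single (i : Fin n) :
    f k n (Pi.single i 1) = MonoidAlgebra.of k F (FreeGroup.of i) - 1 := by
  simp [f, Pi.single_apply, ite_mul]

lemma key (g : F) : f k n (D k n g) = MonoidAlgebra.of k F g - 1 := by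
  induction g using FreeGroup.induction_on with
  | C1 => simp [D_one, ← MonoidAlgebra.one_def]
  | of i =>
      show f k n (D k n (FreeGroup.of i)) = MonoidAlgebra.of k F (FreeGroup.of i) - 1
      rw [D_of, f_single]
  | inv_of i h =>
      show f k n (D k n (FreeGroup.of i)⁻¹) = MonoidAlgebra.of k F (FreeGroup.of i)⁻¹ - 1
      replace h : f k n (D k n (FreeGroup.of i)) = MonoidAlgebra.of k F (FreeGroup.of i) - 1 := h
      have h0 : D k n ((FreeGroup.of i)⁻¹ * FreeGroup.of i) = 0 := by
        simp [D_one]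
      rw [D_mul] at h0
      have hD : D k n (FreeGroup.of i)⁻¹
          = -((MonoidAlgebra.of k F).toHomUnits (FreeGroup.of i)⁻¹ • D k n (FreeGroup.of i)) :=
        eq_neg_of_add_eq_zero_left h0
      rw [hD, map_neg, Units.smul_def, map_smul, smul_eq_mul, h]
      simp only [MonoidHom.coe_toHomUnits]
      rw [mul_sub, mul_one, ← map_mul, inv_mul_cancel, map_one, neg_sub]
  | mul g h hg hh =>
      rw [D_mul, map_add, Units.smul_def, map_smul, smul_eq_mul, hg, hh]
      simp only [MonoidHom.coe_toHomUnits, map_mul]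
      noncomm_ring

/-- Fox derivative, extended `k`-linearly to the group algebra. -/
def Phi : Λ →ₗ[k] (Fin n → Λ) :=
  (Finsupp.lsum k fun g => LinearMap.toSpanSingleton k _ (D k n g)) ∘ₗ
    (MonoidAlgebra.coeffLinearEquiv k).toLinearMap

lemma Phi_of (g : F) : Phi k n (MonoidAlgebra.of k F g) = D k n g := by
  rw [MonoidAlgebra.of_apply]
  show Finsupp.lsum k (fun g => LinearMap.toSpanSingleton k _ (D k n g))
      (Finsupp.single g 1) = D k n g
  rw [Finsupp.lsum_single]
  exact one_smul _ _

lemma Phi_mul_X (i : Fin n) (a : Λ) :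
    Phi k n (a * (MonoidAlgebra.of k F (FreeGroup.of i) - 1)) = Pi.single i a := by
  have key : (Phi k n).comp
        (LinearMap.mulRight k (MonoidAlgebra.of k F (FreeGroup.of i) - 1))
      = LinearMap.single k (fun _ : Fin n => Λ) i := by
    apply MonoidAlgebra.lhom_ext'
    intro g
    refine LinearMap.ext fun b => ?_
    simp only [LinearMap.comp_apply, MonoidAlgebra.lsingle_apply]
    have hb : (MonoidAlgebra.single g b : Λ) = b • MonoidAlgebra.of k F g := by
      simp [MonoidAlgebra.of_apply, MonoidAlgebra.smul_single']
    simp only [LinearMap.comp_apply, LinearMap.mulRight_apply, hb, smul_mul_assoc,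
      map_smul]
    congr 1
    show Phi k n (MonoidAlgebra.of k F g * (MonoidAlgebra.of k F (FreeGroup.of i) - 1))
        = Pi.single i (MonoidAlgebra.of k F g)
    rw [mul_sub, mul_one, ← map_mul, map_sub, Phi_of, Phi_of, D_mul,
      add_sub_cancel_left, D_of, unitsSmul]
    funext j
    simp [Pi.single_apply, mul_ite]
  exact DFunLike.congr_fun key a

lemma leftInv (c : Fin n → Λ) : Phi k n (f k n c) = c := by
  have : f k n c = ∑ i, c i * (MonoidAlgebra.of k F (FreeGroup.of i) - 1) := rfl
  rw [this, map_sum]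
  simp only [Phi_mul_X]
  exact Finset.univ_sum_single c

lemma reprod (a : Λ) :
    f k n (Phi k n a) = a - algebraMap k Λ (freeGroupAug k n a) := by
  have key2 : ((f k n).restrictScalars k).comp (Phi k n)
      = LinearMap.id - (Algebra.linearMap k Λ).comp (freeGroupAug k n).toLinearMap := by
    apply MonoidAlgebra.lhom_ext'
    intro g
    refine LinearMap.ext fun b => ?_
    simp only [LinearMap.comp_apply, MonoidAlgebra.lsingle_apply]
    have hb : (MonoidAlgebra.single g b : Λ) = b • MonoidAlgebra.of k F g := by
      simp [MonoidAlgebra.of_apply, MonoidAlgebra.smul_single']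
    simp only [LinearMap.comp_apply, LinearMap.restrictScalars_apply, hb, map_smul,
      LinearMap.sub_apply, LinearMap.id_apply, AlgHom.toLinearMap_apply,
      Algebra.linearMap_apply]
    congr 1
    show f k n (Phi k n (MonoidAlgebra.of k F g))
        = MonoidAlgebra.of k F g
          - algebraMap k (MonoidAlgebra k F) (freeGroupAug k n (MonoidAlgebra.of k F g))
    rw [Phi_of, key, freeGroupAug, MonoidAlgebra.lift_of]
    simp [MonoidAlgebra.one_def]
  exact DFunLike.congr_fun key2 a

lemma f_mem (c : Fin n → Λ) : f k n c ∈ RingHom.ker (freeGroupAug k n) := by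
  rw [RingHom.mem_ker]
  show freeGroupAug k n (∑ i, c i * (MonoidAlgebra.of k F (FreeGroup.of i) - 1)) = 0
  rw [map_sum]
  refine Finset.sum_eq_zero fun i _ => ?_
  rw [map_mul, map_sub, map_one, freeGroupAug, MonoidAlgebra.lift_of]
  simp

end FoxAux

end FoxAux

theorem stmt1 (k : Type*) [CommRing k] (n : ℕ) (hn : 1 ≤ n) :
    ∃ b : Module.Basis (Fin n) (MonoidAlgebra k (FreeGroup (Fin n)))
        ↥(RingHom.ker (freeGroupAug k n)),
      ∀ i : Fin n, (b i : MonoidAlgebra k (FreeGroup (Fin n)))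
        = MonoidAlgebra.of k (FreeGroup (Fin n)) (FreeGroup.of i) - 1 := by
  classical
  set Λ := MonoidAlgebra k (FreeGroup (Fin n))
  let f' : (Fin n → Λ) →ₗ[Λ] (RingHom.ker (freeGroupAug k n)) :=
    (FoxAux.f k n).codRestrict (RingHom.ker (freeGroupAug k n)) (FoxAux.f_mem k n)
  have hinj : Function.Injective f' := by
    intro c d h
    have h2 : FoxAux.f k n c = FoxAux.f k n d := congrArg Subtype.val h
    have := FoxAux.leftInv k n c
    rw [h2, FoxAux.leftInv k n d] at this
    exact this.symm
  have hsurj : Function.Surjective f' := by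
    rintro ⟨a, ha⟩
    refine ⟨FoxAux.Phi k n a, ?_⟩
    apply Subtype.ext
    show FoxAux.f k n (FoxAux.Phi k n a) = a
    rw [FoxAux.reprod]
    rw [RingHom.mem_ker] at ha
    rw [ha, map_zero, sub_zero]
  let e := LinearEquiv.ofBijective f' ⟨hinj, hsurj⟩
  refine ⟨(Pi.basisFun Λ (Fin n)).map e, fun i => ?_⟩
  rw [Module.Basis.map_apply, Pi.basisFun_apply]
  show (FoxAux.f k n) (Pi.single i 1) = _
  exact FoxAux.f_single k n i
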